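/- For every natural number k, the largest possible cardinality of a finite abelian group G possessing two generators g_1, g_2 such that every element of G can be written as a_1 g_1 + a_2 g_2 with nonnegative integers a_1, a_2 satisfying a_1 + a_2 ≤ k is exactly ⌊(k+2)²/3⌋. -/

import Mathlib

namespace Stmt13

variable {G : Type} [AddCommGroup G]

lemma arith_final (K h' l n : ℕ) (hK : 2 ≤ K)
    (hb : n ≤ (K - h') * h' + l * ((K - l) - h'))
    (h1 : 1 ≤ h') (hlh : h' + l ≤ K) : n ≤ K ^ 2 / 3 := by
  have key : 12 * (((K - h') * h' + l * ((K - l) - h') : ℕ) : ℤ)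
      + (2 * (K : ℤ) - 3 * h' - 3 * l) ^ 2 + 3 * ((h' : ℤ) - l) ^ 2
      = 4 * (K : ℤ) ^ 2 := by
    have c1 : ((K - h' : ℕ) : ℤ) = (K : ℤ) - h' := by omega
    have c2 : (((K - l) - h' : ℕ) : ℤ) = (K : ℤ) - l - h' := by omega
    push_cast [c1, c2]
    ring
  have hsq1 : 0 ≤ (2 * (K : ℤ) - 3 * h' - 3 * l) ^ 2 := sq_nonneg _
  have hsq2 : 0 ≤ ((h' : ℤ) - l) ^ 2 := sq_nonneg _
  have ecast : ((K ^ 2 : ℕ) : ℤ) = (K : ℤ) ^ 2 := by push_cast; ring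
  have hKK : K ^ 2 % 3 = (K % 3) * (K % 3) % 3 := by
    rw [pow_two, Nat.mul_mod]
  rcases Nat.eq_zero_or_pos (K % 3) with h3 | h3
  · have hnat : 12 * n ≤ 4 * K ^ 2 := by omega
    omega
  · have hs : (2 * (K : ℤ) - 3 * h' - 3 * l) ≠ 0 := by
      intro h0
      omega
    have hs2 : (2 * (K : ℤ) - 3 * h' - 3 * l) ^ 2 ≠ 0 := pow_ne_zero 2 hs
    have hs1 : 1 ≤ (2 * (K : ℤ) - 3 * h' - 3 * l) ^ 2 := by omega
    have hnat : 12 * n + 1 ≤ 4 * K ^ 2 := by omega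
    have hmod : K ^ 2 % 3 = 1 := by
      have : K % 3 = 1 ∨ K % 3 = 2 := by omega
      rcases this with h | h <;> rw [hKK, h] <;> rfl
    omega

noncomputable section

def ff (g₁ g₂ : G) (p : ℕ × ℕ) : G := p.1 • g₁ + p.2 • g₂

def dd (g₁ g₂ : G) (a : G) : ℕ := sInf {s | ∃ p : ℕ × ℕ, p.1 + p.2 = s ∧ ff g₁ g₂ p = a}

def bb (g₁ g₂ : G) (a : G) : ℕ :=
  sInf {y | ∃ x, x + y = dd g₁ g₂ a ∧ ff g₁ g₂ (x, y) = a}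

def rr (g₁ g₂ : G) (a : G) : ℕ × ℕ := (dd g₁ g₂ a - bb g₁ g₂ a, bb g₁ g₂ a)

variable (g₁ g₂ : G)

lemma rr_snd (a : G) : (rr g₁ g₂ a).2 = bb g₁ g₂ a := rfl

lemma ff_succ_left (x y : ℕ) : ff g₁ g₂ (x + 1, y) = ff g₁ g₂ (x, y) + g₁ := by
  simp only [ff, succ_nsmul]; abel

lemma ff_succ_right (x y : ℕ) : ff g₁ g₂ (x, y + 1) = ff g₁ g₂ (x, y) + g₂ := by
  simp only [ff, succ_nsmul]; abel

lemma dd_le {a : G} {p : ℕ × ℕ} (h : ff g₁ g₂ p = a) : dd g₁ g₂ a ≤ p.1 + p.2 :=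
  Nat.sInf_le ⟨p, rfl, h⟩

lemma bb_le {a : G} {x y : ℕ} (h : ff g₁ g₂ (x, y) = a) (hs : x + y = dd g₁ g₂ a) :
    bb g₁ g₂ a ≤ y :=
  Nat.sInf_le ⟨x, hs, h⟩

lemma nsmul_diag_eq {x y x' y' : ℕ} (hxx : x' < x) (hyy : y < y')
    (h : ff g₁ g₂ (x + 1, y + 1) = ff g₁ g₂ (x' + 1, y' + 1)) :
    ff g₁ g₂ (x - x', 0) = ff g₁ g₂ (0, y' - y) := by
  have hz : ((x : ℤ) + 1) • g₁ + ((y : ℤ) + 1) • g₂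
      = ((x' : ℤ) + 1) • g₁ + ((y' : ℤ) + 1) • g₂ := by
    simp only [ff] at h
    have e1 : ∀ (n : ℕ) (g : G), ((n : ℤ) + 1) • g = (n + 1) • g := by
      intro n g
      rw [show ((n : ℤ) + 1) = ((n + 1 : ℕ) : ℤ) by push_cast; ring, natCast_zsmul]
    rw [e1, e1, e1, e1]
    exact h
  have hz2 : ((x : ℤ) - x') • g₁ = ((y' : ℤ) - y) • g₂ := by
    have e : ((x : ℤ) - x') • g₁ - ((y' : ℤ) - y) • g₂
        = (((x : ℤ) + 1) • g₁ + ((y : ℤ) + 1) • g₂)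
          - (((x' : ℤ) + 1) • g₁ + ((y' : ℤ) + 1) • g₂) := by
      rw [sub_zsmul, sub_zsmul]; module
    rw [hz, sub_self] at e
    exact sub_eq_zero.mp e
  have hx : ((x : ℤ) - x') = (((x - x' : ℕ)) : ℤ) := by omega
  have hy : ((y' : ℤ) - y) = (((y' - y : ℕ)) : ℤ) := by omega
  rw [hx, hy, natCast_zsmul, natCast_zsmul] at hz2
  simp only [ff, zero_nsmul, add_zero, zero_add]
  exact hz2

section WithCover

variable {k : ℕ}

lemma dd_spec (Hc : ∀ a : G, ∃ p : ℕ × ℕ, p.1 + p.2 ≤ k ∧ ff g₁ g₂ p = a) (a : G) :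
    ∃ p : ℕ × ℕ, p.1 + p.2 = dd g₁ g₂ a ∧ ff g₁ g₂ p = a := by
  have : ∃ s, s ∈ {s | ∃ p : ℕ × ℕ, p.1 + p.2 = s ∧ ff g₁ g₂ p = a} := by
    obtain ⟨p, _, hp⟩ := Hc a
    exact ⟨p.1 + p.2, p, rfl, hp⟩
  exact Nat.sInf_mem this

variable (Hc : ∀ a : G, ∃ p : ℕ × ℕ, p.1 + p.2 ≤ k ∧ ff g₁ g₂ p = a)
include Hc

lemma dd_le_k (a : G) : dd g₁ g₂ a ≤ k := by
  obtain ⟨p, hps, hp⟩ := Hc a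
  exact le_trans (dd_le g₁ g₂ hp) hps

lemma bb_spec (a : G) :
    ∃ x, x + bb g₁ g₂ a = dd g₁ g₂ a ∧ ff g₁ g₂ (x, bb g₁ g₂ a) = a := by
  have : ∃ y, y ∈ {y | ∃ x, x + y = dd g₁ g₂ a ∧ ff g₁ g₂ (x, y) = a} := by
    obtain ⟨⟨x, y⟩, hs, hp⟩ := dd_spec g₁ g₂ Hc a
    exact ⟨y, x, hs, hp⟩
  exact Nat.sInf_mem this

lemma rr_spec (a : G) :
    ff g₁ g₂ (rr g₁ g₂ a) = a ∧ (rr g₁ g₂ a).1 + (rr g₁ g₂ a).2 = dd g₁ g₂ a := by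
  obtain ⟨x, hx, hf⟩ := bb_spec g₁ g₂ Hc a
  have hx' : x = dd g₁ g₂ a - bb g₁ g₂ a := by omega
  constructor
  · show ff g₁ g₂ (dd g₁ g₂ a - bb g₁ g₂ a, bb g₁ g₂ a) = a
    rw [← hx']; exact hf
  · show dd g₁ g₂ a - bb g₁ g₂ a + bb g₁ g₂ a = dd g₁ g₂ a
    omega

lemma rr_inj : Function.Injective (rr g₁ g₂ : G → ℕ × ℕ) := by
  intro a a' h
  have h1 := (rr_spec g₁ g₂ Hc a).1
  have h2 := (rr_spec g₁ g₂ Hc a').1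
  rw [← h1, ← h2, h]

end WithCover

/-- the set of chosen minimal representatives -/
def AA : Set (ℕ × ℕ) := Set.range (rr g₁ g₂)

section WithCover2

variable {k : ℕ} (Hc : ∀ a : G, ∃ p : ℕ × ℕ, p.1 + p.2 ≤ k ∧ ff g₁ g₂ p = a)
include Hc

lemma mem_AA_iff {p : ℕ × ℕ} : p ∈ AA g₁ g₂ ↔ rr g₁ g₂ (ff g₁ g₂ p) = p := by
  constructor
  · rintro ⟨a, rfl⟩
    rw [(rr_spec g₁ g₂ Hc a).1]
  · intro h; exact ⟨_, h⟩

lemma sum_le_of_mem {p : ℕ × ℕ} (hp : p ∈ AA g₁ g₂) : p.1 + p.2 ≤ k := by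
  obtain ⟨a, rfl⟩ := hp
  rw [(rr_spec g₁ g₂ Hc a).2]
  exact dd_le_k g₁ g₂ Hc a

lemma down_h {x y : ℕ} (hp : (x + 1, y) ∈ AA g₁ g₂) : (x, y) ∈ AA g₁ g₂ := by
  rw [mem_AA_iff g₁ g₂ Hc] at hp ⊢
  set g := ff g₁ g₂ (x + 1, y) with hg
  set g' := ff g₁ g₂ (x, y) with hg'
  obtain ⟨u, v, huv⟩ : ∃ u v, rr g₁ g₂ g' = (u, v) := ⟨_, _, rfl⟩
  obtain ⟨hf', hs'⟩ := rr_spec g₁ g₂ Hc g'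
  rw [huv] at hf' hs'
  have h1 : dd g₁ g₂ g' ≤ x + y := dd_le g₁ g₂ rfl
  have h2 : ff g₁ g₂ (u + 1, v) = g := by
    rw [ff_succ_left, hf', hg', ← ff_succ_left]
  have h3 : dd g₁ g₂ g = x + 1 + y := by
    have := (rr_spec g₁ g₂ Hc g).2
    rw [hp] at this; omega
  have h4 : dd g₁ g₂ g ≤ u + 1 + v := by
    have := dd_le g₁ g₂ h2; simpa using this
  have h5 : bb g₁ g₂ g ≤ v := bb_le g₁ g₂ h2 (by omega)
  have h6 : bb g₁ g₂ g = y := by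
    have := congrArg Prod.snd hp
    simpa [rr_snd] using this
  have h7 : bb g₁ g₂ g' ≤ y := bb_le g₁ g₂ rfl (by omega)
  have h8 : bb g₁ g₂ g' = v := by
    have := congrArg Prod.snd huv
    simpa [rr_snd] using this
  have hv : v = y := by omega
  have hu : u = x := by omega
  rw [huv, hu, hv]

lemma down_v {x y : ℕ} (hp : (x, y + 1) ∈ AA g₁ g₂) : (x, y) ∈ AA g₁ g₂ := by
  rw [mem_AA_iff g₁ g₂ Hc] at hp ⊢
  set g := ff g₁ g₂ (x, y + 1) with hg
  set g' := ff g₁ g₂ (x, y) with hg'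
  obtain ⟨u, v, huv⟩ : ∃ u v, rr g₁ g₂ g' = (u, v) := ⟨_, _, rfl⟩
  obtain ⟨hf', hs'⟩ := rr_spec g₁ g₂ Hc g'
  rw [huv] at hf' hs'
  have h1 : dd g₁ g₂ g' ≤ x + y := dd_le g₁ g₂ rfl
  have h2 : ff g₁ g₂ (u, v + 1) = g := by
    rw [ff_succ_right, hf', hg', ← ff_succ_right]
  have h3 : dd g₁ g₂ g = x + (y + 1) := by
    have := (rr_spec g₁ g₂ Hc g).2
    rw [hp] at this; omega
  have h4 : dd g₁ g₂ g ≤ x + (y + 1) := dd_le g₁ g₂ rfl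
  have h4' : dd g₁ g₂ g ≤ u + (v + 1) := by
    have := dd_le g₁ g₂ h2; simpa using this
  have h5 : bb g₁ g₂ g ≤ v + 1 := bb_le g₁ g₂ h2 (by omega)
  have h6 : bb g₁ g₂ g = y + 1 := by
    have := congrArg Prod.snd hp
    simpa [rr_snd] using this
  have h7 : bb g₁ g₂ g' ≤ y := bb_le g₁ g₂ rfl (by omega)
  have h8 : bb g₁ g₂ g' = v := by
    have := congrArg Prod.snd huv
    simpa [rr_snd] using this
  have hv : v = y := by omega
  have hu : u = x := by omega
  rw [huv, hu, hv]

lemma down_h_add : ∀ t x y, (x + t, y) ∈ AA g₁ g₂ → (x, y) ∈ AA g₁ g₂ := by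
  intro t
  induction t with
  | zero => intro x y hp; simpa using hp
  | succ n ih =>
      intro x y hp
      refine ih x y (down_h g₁ g₂ Hc ?_)
      rw [show x + n + 1 = x + (n + 1) by omega]
      exact hp

lemma down_v_add : ∀ t x y, (x, y + t) ∈ AA g₁ g₂ → (x, y) ∈ AA g₁ g₂ := by
  intro t
  induction t with
  | zero => intro x y hp; simpa using hp
  | succ n ih =>
      intro x y hp
      refine ih x y (down_v g₁ g₂ Hc ?_)
      exact hp

lemma down_h_le {x x' y : ℕ} (hp : (x, y) ∈ AA g₁ g₂) (hle : x' ≤ x) :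
    (x', y) ∈ AA g₁ g₂ := by
  refine down_h_add g₁ g₂ Hc (x - x') x' y ?_
  rw [show x' + (x - x') = x by omega]
  exact hp

lemma down_v_le {x y y' : ℕ} (hp : (x, y) ∈ AA g₁ g₂) (hle : y' ≤ y) :
    (x, y') ∈ AA g₁ g₂ := by
  refine down_v_add g₁ g₂ Hc (y - y') x y' ?_
  rw [show y' + (y - y') = y by omega]
  exact hp

lemma zero_mem_AA : ((0 : ℕ), (0 : ℕ)) ∈ AA g₁ g₂ := by
  rw [mem_AA_iff g₁ g₂ Hc]
  have hd : dd g₁ g₂ (ff g₁ g₂ ((0 : ℕ), (0 : ℕ))) = 0 := by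
    have := dd_le g₁ g₂ (a := ff g₁ g₂ ((0:ℕ),(0:ℕ))) (p := ((0:ℕ),(0:ℕ))) rfl
    simpa using this
  have hb : bb g₁ g₂ (ff g₁ g₂ ((0 : ℕ), (0 : ℕ))) = 0 := by
    have := bb_le g₁ g₂ (a := ff g₁ g₂ ((0:ℕ),(0:ℕ))) (x := 0) (y := 0) rfl (by omega)
    omega
  show (dd g₁ g₂ _ - bb g₁ g₂ _, bb g₁ g₂ _) = ((0:ℕ), (0:ℕ))
  rw [hd, hb]

lemma drop_lemma {x y : ℕ} (h1 : (x + 1, y + 1) ∉ AA g₁ g₂)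
    (h2 : (x, y + 1) ∈ AA g₁ g₂) (h3 : (x + 1, y) ∈ AA g₁ g₂) :
    ff g₁ g₂ (x + 1, y + 1) = 0 := by
  set g := ff g₁ g₂ (x + 1, y + 1) with hg
  have hrr := rr_spec g₁ g₂ Hc g
  obtain ⟨u, v, huv⟩ : ∃ u v, rr g₁ g₂ g = (u, v) := ⟨_, _, rfl⟩
  have hffuv : ff g₁ g₂ (u, v) = g := by rw [← huv]; exact hrr.1
  have hsum : u + v = dd g₁ g₂ g := by
    have := hrr.2; rw [huv] at this; exact this
  have hbv : bb g₁ g₂ g = v := by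
    have := congrArg Prod.snd huv; simpa [rr_snd] using this
  have hdle : dd g₁ g₂ g ≤ x + 1 + (y + 1) := by
    have := dd_le g₁ g₂ (a := g) (p := (x+1, y+1)) rfl
    simpa using this
  -- Step A : u = 0
  have hA : u = 0 := by
    by_contra hcon
    obtain ⟨u', rfl⟩ : ∃ u', u = u' + 1 := ⟨u - 1, by omega⟩
    set g' := ff g₁ g₂ (x, y + 1) with hg'
    have hrg' : rr g₁ g₂ g' = (x, y + 1) := (mem_AA_iff g₁ g₂ Hc).1 h2
    have hdg' : dd g₁ g₂ g' = x + (y + 1) := by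
      have := (rr_spec g₁ g₂ Hc g').2
      rw [hrg'] at this; omega
    have hbg' : bb g₁ g₂ g' = y + 1 := by
      have := congrArg Prod.snd hrg'; simpa [rr_snd] using this
    have hffu'v : ff g₁ g₂ (u', v) = g' := by
      have e1 : ff g₁ g₂ (u', v) + g₁ = g := by rw [← ff_succ_left]; exact hffuv
      have e2 : g' + g₁ = g := by rw [hg', ← ff_succ_left]
      exact add_right_cancel (e1.trans e2.symm)
    have hd1 : dd g₁ g₂ g' ≤ u' + v := by
      have := dd_le g₁ g₂ hffu'v; simpa using this
    have hd2 : dd g₁ g₂ g = x + 1 + (y + 1) := by omega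
    have hb1 : bb g₁ g₂ g ≤ y + 1 :=
      bb_le g₁ g₂ (a := g) (x := x+1) (y := y+1) rfl (by omega)
    have hb2 : bb g₁ g₂ g' ≤ v := bb_le g₁ g₂ hffu'v (by omega)
    apply h1
    rw [mem_AA_iff g₁ g₂ Hc]
    rw [← hg, huv]
    have hveq : v = y + 1 := by omega
    have hueq : u' = x := by omega
    rw [hueq, hveq]
  -- Step B : v = 0
  have hB : v = 0 := by
    by_contra hcon
    obtain ⟨v', rfl⟩ : ∃ v', v = v' + 1 := ⟨v - 1, by omega⟩
    have hrmem : ((u, v' + 1) : ℕ × ℕ) ∈ AA g₁ g₂ := ⟨g, huv⟩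
    have h0v' : ((u, v') : ℕ × ℕ) ∈ AA g₁ g₂ := down_v g₁ g₂ Hc hrmem
    have hffeq : ff g₁ g₂ (x + 1, y) = ff g₁ g₂ (u, v') := by
      have e1 : ff g₁ g₂ (x + 1, y) + g₂ = g := by rw [hg, ← ff_succ_right]
      have e2 : ff g₁ g₂ (u, v') + g₂ = g := by rw [← ff_succ_right]; exact hffuv
      exact add_right_cancel (e1.trans e2.symm)
    have hr1 : rr g₁ g₂ (ff g₁ g₂ (x + 1, y)) = (x + 1, y) := (mem_AA_iff g₁ g₂ Hc).1 h3
    have hr2 : rr g₁ g₂ (ff g₁ g₂ (u, v')) = (u, v') := (mem_AA_iff g₁ g₂ Hc).1 h0v'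
    rw [hffeq, hr2] at hr1
    have : u = x + 1 := congrArg Prod.fst hr1
    omega
  have h00 : ff g₁ g₂ ((0 : ℕ), (0 : ℕ)) = g := by
    rw [← hffuv, hA, hB]
  rw [← h00]
  simp [ff]

lemma one_drop {x y x' y' : ℕ} (hy : y < y')
    (h1 : (x + 1, y + 1) ∉ AA g₁ g₂) (h2 : (x, y + 1) ∈ AA g₁ g₂)
    (h3 : (x + 1, y) ∈ AA g₁ g₂)
    (h1' : (x' + 1, y' + 1) ∉ AA g₁ g₂) (h2' : (x', y' + 1) ∈ AA g₁ g₂)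
    (h3' : (x' + 1, y') ∈ AA g₁ g₂) : False := by
  have hxx : x' < x := by
    by_contra hcon
    push_neg at hcon
    rcases Nat.lt_or_ge x x' with hlt | hge
    · have hstep := down_h_le g₁ g₂ Hc h2' (by omega : x + 1 ≤ x')
      exact h1 (down_v_le g₁ g₂ Hc hstep (by omega))
    · have hxeq : x = x' := by omega
      subst hxeq
      exact h1 (down_v_le g₁ g₂ Hc h3' (by omega))
  have hz1 := drop_lemma g₁ g₂ Hc h1 h2 h3
  have hz2 := drop_lemma g₁ g₂ Hc h1' h2' h3'
  have heq := nsmul_diag_eq g₁ g₂ hxx hy (hz1.trans hz2.symm)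
  have hm1 : ((x - x', 0) : ℕ × ℕ) ∈ AA g₁ g₂ := by
    have hstep := down_v_le g₁ g₂ Hc h2 (Nat.zero_le _)
    exact down_h_le g₁ g₂ Hc hstep (by omega)
  have hm2 : ((0, y' - y) : ℕ × ℕ) ∈ AA g₁ g₂ := by
    have hstep := down_h_le g₁ g₂ Hc h2' (Nat.zero_le _)
    exact down_v_le g₁ g₂ Hc hstep (by omega)
  have hr1 := (mem_AA_iff g₁ g₂ Hc).1 hm1
  have hr2 := (mem_AA_iff g₁ g₂ Hc).1 hm2
  rw [heq, hr2] at hr1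
  have : (0 : ℕ) = x - x' := congrArg Prod.fst hr1
  omega

/-- row widths -/
def ww (y : ℕ) : ℕ := sInf {x | (x, y) ∉ AA g₁ g₂}

lemma ww_notmem (y : ℕ) : (ww g₁ g₂ y, y) ∉ AA g₁ g₂ := by
  have hne : ∃ x, x ∈ {x | (x, y) ∉ AA g₁ g₂} := by
    refine ⟨k + 1, fun hmem => ?_⟩
    have := sum_le_of_mem g₁ g₂ Hc hmem
    simp at this; omega
  exact Nat.sInf_mem hne

lemma mem_iff_lt_ww {x y : ℕ} : (x, y) ∈ AA g₁ g₂ ↔ x < ww g₁ g₂ y := by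
  constructor
  · intro h
    by_contra hcon
    push_neg at hcon
    exact ww_notmem g₁ g₂ Hc y (down_h_le g₁ g₂ Hc h hcon)
  · intro h
    by_contra hcon
    have hle : ww g₁ g₂ y ≤ x := Nat.sInf_le hcon
    omega

lemma ww_antitone {y y' : ℕ} (h : y ≤ y') : ww g₁ g₂ y' ≤ ww g₁ g₂ y := by
  by_contra hcon
  push_neg at hcon
  have h1 : (ww g₁ g₂ y, y') ∈ AA g₁ g₂ := (mem_iff_lt_ww g₁ g₂ Hc).2 hcon
  have h2 := down_v_le g₁ g₂ Hc h1 h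
  rw [mem_iff_lt_ww g₁ g₂ Hc] at h2
  omega

/-- column-0 height -/
def hcol : ℕ := sInf {y | ((0 : ℕ), y) ∉ AA g₁ g₂}

lemma hcol_notmem : ((0 : ℕ), hcol g₁ g₂) ∉ AA g₁ g₂ := by
  have hne : ∃ y, y ∈ {y | ((0:ℕ), y) ∉ AA g₁ g₂} := by
    refine ⟨k + 1, fun hmem => ?_⟩
    have h2 : (0 : ℕ) + (k + 1) ≤ k := sum_le_of_mem g₁ g₂ Hc hmem
    omega
  exact Nat.sInf_mem hne

lemma mem0_iff_lt_hcol {y : ℕ} : ((0 : ℕ), y) ∈ AA g₁ g₂ ↔ y < hcol g₁ g₂ := by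
  constructor
  · intro h
    by_contra hcon
    push_neg at hcon
    exact hcol_notmem g₁ g₂ Hc (down_v_le g₁ g₂ Hc h hcon)
  · intro h
    by_contra hcon
    have hle : hcol g₁ g₂ ≤ y := Nat.sInf_le hcon
    omega

lemma ww_pos_iff {y : ℕ} : 0 < ww g₁ g₂ y ↔ y < hcol g₁ g₂ := by
  rw [← mem_iff_lt_ww g₁ g₂ Hc, ← mem0_iff_lt_hcol g₁ g₂ Hc]

lemma final_count (W HH h' l : ℕ)
    (hW : W = ww g₁ g₂ 0) (hHH : HH = hcol g₁ g₂)
    (hp1 : 1 ≤ h') (hp2 : h' ≤ HH)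
    (hw1 : ∀ y, y < h' → ww g₁ g₂ y = W)
    (hw2 : ∀ y, h' ≤ y → y < HH → ww g₁ g₂ y = l)
    (hl' : h' = HH → l = 0) :
    Nat.card G ≤ (k + 2) ^ 2 / 3 := by
  set K := k + 2 with hK
  have h00 := zero_mem_AA g₁ g₂ Hc
  have hW1 : 1 ≤ W := by
    have := (mem_iff_lt_ww g₁ g₂ Hc).1 h00
    omega
  have hH1 : 1 ≤ HH := by
    have := (mem0_iff_lt_hcol g₁ g₂ Hc).1 h00
    omega
  -- constraint 1 : W + h' ≤ K
  have hcon1 : W + h' ≤ K := by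
    have hmem : ((W - 1, h' - 1) : ℕ × ℕ) ∈ AA g₁ g₂ := by
      rw [mem_iff_lt_ww g₁ g₂ Hc, hw1 (h' - 1) (by omega)]
      omega
    have := sum_le_of_mem g₁ g₂ Hc hmem
    simp only at this
    omega
  -- constraint 2 : l + HH ≤ K
  have hcon2 : l + HH ≤ K := by
    rcases Nat.lt_or_ge h' HH with hlt | hge
    · have hl1 : 1 ≤ l := by
        have : 0 < ww g₁ g₂ h' := (ww_pos_iff g₁ g₂ Hc).2 (by omega)
        rw [hw2 h' le_rfl hlt] at this
        omega
      have hmem : ((l - 1, HH - 1) : ℕ × ℕ) ∈ AA g₁ g₂ := by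
        rw [mem_iff_lt_ww g₁ g₂ Hc, hw2 (HH - 1) (by omega) (by omega)]
        omega
      have := sum_le_of_mem g₁ g₂ Hc hmem
      simp only at this
      omega
    · have hEq : h' = HH := by omega
      have hl0 : l = 0 := hl' hEq
      have hmem : ((0, HH - 1) : ℕ × ℕ) ∈ AA g₁ g₂ :=
        (mem0_iff_lt_hcol g₁ g₂ Hc).2 (by omega)
      have := sum_le_of_mem g₁ g₂ Hc hmem
      simp only at this
      omega
  -- the explicit Finset
  set F : Finset (ℕ × ℕ) :=
    ((Finset.range W) ×ˢ (Finset.range h')) ∪ ((Finset.range l) ×ˢ (Finset.Ico h' HH))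
    with hF
  have hAF : AA g₁ g₂ = ↑F := by
    ext ⟨x, y⟩
    rw [mem_iff_lt_ww g₁ g₂ Hc]
    simp only [hF, Finset.coe_union, Set.mem_union, Finset.coe_product,
      Set.mem_prod, Finset.mem_coe, Finset.mem_range, Finset.mem_Ico,
      Finset.coe_range, Set.mem_Iio, Set.mem_Ico]
    constructor
    · intro hx
      rcases Nat.lt_or_ge y h' with h1 | h1
      · left; exact ⟨by rwa [hw1 y h1] at hx, h1⟩
      · rcases Nat.lt_or_ge y HH with h2 | h2
        · right; exact ⟨by rwa [hw2 y h1 h2] at hx, h1, h2⟩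
        · exfalso
          have : ¬ 0 < ww g₁ g₂ y := by
            rw [ww_pos_iff g₁ g₂ Hc]; omega
          omega
    · rintro (⟨hx, hy⟩ | ⟨hx, hy1, hy2⟩)
      · rwa [hw1 y hy]
      · rwa [hw2 y hy1 hy2]
  have hdisj : Disjoint ((Finset.range W) ×ˢ (Finset.range h'))
      ((Finset.range l) ×ˢ (Finset.Ico h' HH)) := by
    rw [Finset.disjoint_left]
    rintro ⟨x, y⟩ hm1 hm2
    simp only [Finset.mem_product, Finset.mem_range, Finset.mem_Ico] at hm1 hm2
    omega
  have hcard : F.card = W * h' + l * (HH - h') := by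
    rw [hF, Finset.card_union_of_disjoint hdisj]
    simp [Finset.card_product, Nat.card_Ico]
  -- identify Nat.card G
  have hcards : Nat.card G = F.card := by
    have e1 : Nat.card G = Nat.card (AA g₁ g₂) :=
      (Nat.card_range_of_injective (rr_inj g₁ g₂ Hc)).symm
    rw [e1, hAF, Nat.card_coe_set_eq, Set.ncard_coe_finset]
  -- arithmetic
  have hbound : Nat.card G ≤ (K - h') * h' + l * ((K - l) - h') := by
    rw [hcards, hcard]
    have e1 : W * h' ≤ (K - h') * h' := Nat.mul_le_mul_right h' (by omega)
    have e2 : l * (HH - h') ≤ l * ((K - l) - h') := Nat.mul_le_mul_left l (by omega)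
    omega
  have hlh : h' + l ≤ K := by omega
  exact arith_final K h' l _ (by omega) hbound hp1 hlh

theorem card_le_main : Nat.card G ≤ (k + 2) ^ 2 / 3 := by
  classical
  set W := ww g₁ g₂ 0 with hWdef
  set HH := hcol g₁ g₂ with hHHdef
  have h00 := zero_mem_AA g₁ g₂ Hc
  have hH1 : 1 ≤ HH := by
    have := (mem0_iff_lt_hcol g₁ g₂ Hc).1 h00
    omega
  by_cases hrect : ∀ y, y < HH → ww g₁ g₂ y = W
  · -- rectangle case
    refine final_count g₁ g₂ Hc W HH HH 0 hWdef hHHdef hH1 le_rfl ?_ ?_ ?_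
    · intro y hy; exact hrect y hy
    · intro y hy1 hy2; omega
    · intro _; rfl
  · -- there is a drop
    push_neg at hrect
    obtain ⟨yb, hyb1, hyb2⟩ := hrect
    have hanti : ∀ y, ww g₁ g₂ y ≤ W := fun y => ww_antitone g₁ g₂ Hc (Nat.zero_le y)
    have hne0 : ∃ y, y ∈ {y | ww g₁ g₂ y < W} := ⟨yb, by
      have := hanti yb; simp only [Set.mem_setOf_eq]; omega⟩
    set h0 := sInf {y | ww g₁ g₂ y < W} with hh0def
    have hh0 : ww g₁ g₂ h0 < W := Nat.sInf_mem hne0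
    have hh0le : h0 ≤ yb := Nat.sInf_le (by simp only [Set.mem_setOf_eq]; have := hanti yb; omega)
    have hh0H : h0 < HH := by omega
    have hwlt : ∀ y, y < h0 → ww g₁ g₂ y = W := by
      intro y hy
      have h1 : ¬ ww g₁ g₂ y < W := fun hcon => by
        have := Nat.sInf_le (s := {y | ww g₁ g₂ y < W}) hcon
        omega
      have := hanti y
      omega
    have hh0pos : 1 ≤ h0 := by
      rcases Nat.eq_zero_or_pos h0 with h | h
      · exfalso; rw [h] at hh0; omega
      · exact h
    set l := ww g₁ g₂ h0 with hldef
    have hl1 : 1 ≤ l := by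
      have := (ww_pos_iff g₁ g₂ Hc (y := h0)).2 (by omega)
      omega
    -- claim : no second drop
    have hclaim : ∀ y, h0 ≤ y → y < HH → ww g₁ g₂ y = l := by
      by_contra hcon
      push_neg at hcon
      obtain ⟨yc, hyc1, hyc2, hyc3⟩ := hcon
      have hanti2 : ∀ y, h0 ≤ y → ww g₁ g₂ y ≤ l := fun y hy => ww_antitone g₁ g₂ Hc hy
      have hne1 : ∃ y, y ∈ {y | ww g₁ g₂ y < l} := ⟨yc, by
        have := hanti2 yc hyc1; simp only [Set.mem_setOf_eq]; omega⟩
      set y1 := sInf {y | ww g₁ g₂ y < l} with hy1def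
      have hy1mem : ww g₁ g₂ y1 < l := Nat.sInf_mem hne1
      have hy1le : y1 ≤ yc := Nat.sInf_le (by
        simp only [Set.mem_setOf_eq]; have := hanti2 yc hyc1; omega)
      have hy1H : y1 < HH := by omega
      have hy1gt : h0 < y1 := by
        rcases Nat.lt_or_ge h0 y1 with h | h
        · exact h
        · exfalso
          have hmono := ww_antitone g₁ g₂ Hc h
          omega
      have hprev : ww g₁ g₂ (y1 - 1) = l := by
        have hnot : ¬ ww g₁ g₂ (y1 - 1) < l := fun hcon2 => by
          have := Nat.sInf_le (s := {y | ww g₁ g₂ y < l}) hcon2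
          omega
        have := hanti2 (y1 - 1) (by omega)
        omega
      set w1 := ww g₁ g₂ y1 with hw1def
      have hw1pos : 1 ≤ w1 := by
        have := (ww_pos_iff g₁ g₂ Hc (y := y1)).2 (by omega)
        omega
      -- first drop corner at (l, h0) ; second at (w1, y1)
      refine one_drop g₁ g₂ Hc (x := l - 1) (y := h0 - 1) (x' := w1 - 1) (y' := y1 - 1)
        (by omega) ?_ ?_ ?_ ?_ ?_ ?_
      · -- (l-1+1, h0-1+1) ∉ A
        rw [show l - 1 + 1 = l by omega, show h0 - 1 + 1 = h0 by omega]
        rw [mem_iff_lt_ww g₁ g₂ Hc]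
        omega
      · rw [show h0 - 1 + 1 = h0 by omega]
        rw [mem_iff_lt_ww g₁ g₂ Hc]
        omega
      · rw [show l - 1 + 1 = l by omega]
        rw [mem_iff_lt_ww g₁ g₂ Hc, hwlt (h0 - 1) (by omega)]
        omega
      · rw [show w1 - 1 + 1 = w1 by omega, show y1 - 1 + 1 = y1 by omega]
        rw [mem_iff_lt_ww g₁ g₂ Hc]
        omega
      · rw [show y1 - 1 + 1 = y1 by omega]
        rw [mem_iff_lt_ww g₁ g₂ Hc]
        omega
      · rw [show w1 - 1 + 1 = w1 by omega]
        rw [mem_iff_lt_ww g₁ g₂ Hc, hprev]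
        omega
    refine final_count g₁ g₂ Hc W HH h0 l hWdef hHHdef hh0pos (by omega) hwlt hclaim ?_
    intro h; omega

end WithCover2

end

section Lower

/-- the lattice -/
def LL (a b M : ℕ) : AddSubgroup (ℤ × ℤ) :=
  AddSubgroup.closure {((a : ℤ), (b : ℤ)), ((M : ℤ), (0 : ℤ))}

lemma mem_LL_iff (a b M : ℕ) (p : ℤ × ℤ) :
    p ∈ LL a b M ↔ ∃ m n : ℤ, m * a + n * M = p.1 ∧ m * b = p.2 := by
  rw [LL, AddSubgroup.mem_closure_pair]
  constructor
  · rintro ⟨m, n, hmn⟩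
    refine ⟨m, n, ?_, ?_⟩
    · have := congrArg Prod.fst hmn
      simpa [Prod.smul_def, smul_eq_mul] using this
    · have := congrArg Prod.snd hmn
      simpa [Prod.smul_def, smul_eq_mul] using this
  · rintro ⟨m, n, h1, h2⟩
    refine ⟨m, n, ?_⟩
    ext
    · simpa [Prod.smul_def, smul_eq_mul] using h1
    · simpa [Prod.smul_def, smul_eq_mul] using h2

/-- map to the concrete product of cyclic groups -/
def eqvFun (a b M : ℕ) (hb : 0 < b) :
    (ℤ × ℤ) ⧸ LL a b M → ZMod M × ZMod b :=
  fun q => Quotient.liftOn' q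
    (fun p => ((((p.1 - (a : ℤ) * (p.2 / (b : ℤ))) : ℤ) : ZMod M), ((p.2 : ℤ) : ZMod b)))
    (by
      intro p q hpq
      rw [QuotientAddGroup.leftRel_apply, mem_LL_iff] at hpq
      obtain ⟨m, n, h1, h2⟩ := hpq
      simp only [Prod.fst_add, Prod.snd_add, Prod.fst_neg, Prod.snd_neg] at h1 h2
      have hq1 : q.1 = p.1 + m * a + n * M := by linarith
      have hq2 : q.2 = p.2 + m * b := by linarith
      have hbz : (b : ℤ) ≠ 0 := by exact_mod_cast hb.ne'
      have hdiv : q.2 / (b : ℤ) = p.2 / (b : ℤ) + m := by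
        rw [hq2, Int.add_mul_ediv_right _ _ hbz]
      have e1 : q.1 - (a : ℤ) * (q.2 / (b : ℤ))
          = p.1 - (a : ℤ) * (p.2 / (b : ℤ)) + n * M := by
        rw [hq1, hdiv]; ring
      refine Prod.ext ?_ ?_ <;> dsimp only
      · rw [e1]
        push_cast
        simp
      · rw [hq2]
        push_cast
        simp)

lemma eqvFun_mk (a b M : ℕ) (hb : 0 < b) (x y : ℤ) :
    eqvFun a b M hb (QuotientAddGroup.mk (x, y))
      = ((((x - (a : ℤ) * (y / (b : ℤ))) : ℤ) : ZMod M), ((y : ℤ) : ZMod b)) := rfl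

lemma eqvFun_bij (a b M : ℕ) (hb : 0 < b) (hM : 0 < M) :
    Function.Bijective (eqvFun a b M hb) := by
  haveI : NeZero M := ⟨hM.ne'⟩
  haveI : NeZero b := ⟨hb.ne'⟩
  have hbz : (b : ℤ) ≠ 0 := by exact_mod_cast hb.ne'
  constructor
  · intro q q'
    induction q using QuotientAddGroup.induction_on with | H p =>
    induction q' using QuotientAddGroup.induction_on with | H p' =>
    obtain ⟨x, y⟩ := p
    obtain ⟨x', y'⟩ := p'
    intro h
    rw [eqvFun_mk, eqvFun_mk, Prod.ext_iff] at h
    obtain ⟨h1, h2⟩ := h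
    simp only at h1 h2
    have hb2 : ((b : ℤ)) ∣ y' - y :=
      ((ZMod.intCast_eq_intCast_iff _ _ _).1 h2).dvd
    obtain ⟨m, hm⟩ := hb2
    have hdiv : y' / (b : ℤ) = y / (b : ℤ) + m := by
      have hy' : y' = y + m * b := by linarith
      rw [hy', Int.add_mul_ediv_right _ _ hbz]
    have hM2 : ((M : ℤ)) ∣ (x' - (a : ℤ) * (y' / (b : ℤ))) - (x - (a : ℤ) * (y / (b : ℤ))) :=
      ((ZMod.intCast_eq_intCast_iff _ _ _).1 h1).dvd
    obtain ⟨n, hn⟩ := hM2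
    have hn' : x' - x - (a : ℤ) * m = (M : ℤ) * n := by
      rw [hdiv] at hn
      have expand : x' - (a:ℤ) * (y / (b:ℤ) + m) - (x - (a:ℤ) * (y / (b:ℤ)))
          = x' - x - (a : ℤ) * m := by ring
      rw [expand] at hn
      exact hn
    rw [QuotientAddGroup.eq, mem_LL_iff]
    refine ⟨m, n, ?_, ?_⟩
    · simp only [Prod.fst_add, Prod.fst_neg]
      linarith
    · simp only [Prod.snd_add, Prod.snd_neg]
      linarith
  · rintro ⟨u, v⟩
    refine ⟨QuotientAddGroup.mk ((u.val : ℤ), (v.val : ℤ)), ?_⟩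
    rw [eqvFun_mk]
    have hv : ((v.val : ℤ)) / (b : ℤ) = 0 := by
      apply Int.ediv_eq_zero_of_lt
      · exact_mod_cast Nat.zero_le _
      · exact_mod_cast ZMod.val_lt v
    rw [hv]
    refine Prod.ext ?_ ?_ <;> dsimp only
    · push_cast
      simp [ZMod.natCast_val, ZMod.cast_id]
    · push_cast
      simp [ZMod.natCast_val, ZMod.cast_id]

lemma smul_mk_pair (a b M : ℕ) (a₁ a₂ : ℤ) :
    a₁ • (QuotientAddGroup.mk ((1:ℤ),(0:ℤ)) : (ℤ×ℤ) ⧸ LL a b M)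
      + a₂ • (QuotientAddGroup.mk ((0:ℤ),(1:ℤ)) : (ℤ×ℤ) ⧸ LL a b M)
    = QuotientAddGroup.mk (a₁, a₂) := by
  rw [← QuotientAddGroup.mk_zsmul, ← QuotientAddGroup.mk_zsmul, ← QuotientAddGroup.mk_add]
  congr 1
  simp [Prod.ext_iff, smul_eq_mul]

lemma cover_quot (k a b M : ℕ) (hb : 0 < b) (hM : 0 < M)
    (hab : (a : ℤ) = (k : ℤ) + 2 - 2 * b) (hMeq : (M : ℤ) = 2 * ((k : ℤ) + 2) - 3 * b)
    (hbK : 3 * (b : ℤ) ≤ (k : ℤ) + 3)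
    (q : (ℤ × ℤ) ⧸ LL a b M) :
    ∃ a₁ a₂ : ℤ, 0 ≤ a₁ ∧ 0 ≤ a₂ ∧ a₁ + a₂ ≤ (k : ℤ) ∧
      q = a₁ • (QuotientAddGroup.mk ((1:ℤ),(0:ℤ)) : (ℤ×ℤ) ⧸ LL a b M)
          + a₂ • (QuotientAddGroup.mk ((0:ℤ),(1:ℤ)) : (ℤ×ℤ) ⧸ LL a b M) := by
  have hbz : (b : ℤ) ≠ 0 := by exact_mod_cast hb.ne'
  have hbpos : (0 : ℤ) < b := by exact_mod_cast hb
  have hMpos : (0 : ℤ) < M := by exact_mod_cast hM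
  induction q using QuotientAddGroup.induction_on with | H p =>
  obtain ⟨x, y⟩ := p
  set t := y % (b : ℤ) with ht
  set j := y / (b : ℤ) with hj
  have hyd : (b : ℤ) * j + t = y := Int.mul_ediv_add_emod y b
  have ht0 : 0 ≤ t := Int.emod_nonneg y hbz
  have htb : t < b := Int.emod_lt_of_pos y hbpos
  set X := x - (a : ℤ) * j with hX
  set x' := X % (M : ℤ) with hx'
  set s := X / (M : ℤ) with hs
  have hXd : (M : ℤ) * s + x' = X := Int.mul_ediv_add_emod X M
  have hx0 : 0 ≤ x' := Int.emod_nonneg X (by exact_mod_cast hM.ne')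
  have hxM : x' < M := Int.emod_lt_of_pos X hMpos
  rcases le_or_gt (x' + t) (k : ℤ) with hcase | hcase
  · refine ⟨x', t, hx0, ht0, hcase, ?_⟩
    rw [smul_mk_pair, QuotientAddGroup.eq, mem_LL_iff]
    refine ⟨-j, -s, ?_, ?_⟩
    · simp only [Prod.fst_add, Prod.fst_neg]
      linarith
    · simp only [Prod.snd_add, Prod.snd_neg]
      linarith
  · refine ⟨x' - ((M : ℤ) - a), t + b, by linarith, by linarith, by linarith, ?_⟩
    rw [smul_mk_pair, QuotientAddGroup.eq, mem_LL_iff]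
    refine ⟨-(j - 1), -(s + 1), ?_, ?_⟩
    · simp only [Prod.fst_add, Prod.fst_neg]
      linarith
    · simp only [Prod.snd_add, Prod.snd_neg]
      linarith

lemma card_arith (k : ℕ) :
    (2 * (k + 2) - 3 * ((k + 3) / 3)) * ((k + 3) / 3) = (k + 2) ^ 2 / 3 := by
  set K := k + 2 with hK
  set b := (k + 3) / 3 with hbdef
  set t := K / 3 with htdef
  set r := K % 3 with hrdef
  have hKeq : K = 3 * t + r := by omega
  have hr : r < 3 := by omega
  have hK2 : K ^ 2 = 9 * (t * t) + 6 * t * r + r * r := by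
    rw [hKeq]; ring
  interval_cases r
  · have hb : b = t := by omega
    have hM : 2 * K - 3 * b = 3 * t := by omega
    rw [hM, hb]
    have e : 3 * t * t = 3 * (t * t) := by ring
    omega
  · have hb : b = t := by omega
    have hM : 2 * K - 3 * b = 3 * t + 2 := by omega
    rw [hM, hb]
    have e : (3 * t + 2) * t = 3 * (t * t) + 2 * t := by ring
    omega
  · have hb : b = t + 1 := by omega
    have hM : 2 * K - 3 * b = 3 * t + 1 := by omega
    rw [hM, hb]
    have e : (3 * t + 1) * (t + 1) = 3 * (t * t) + 4 * t + 1 := by ring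
    omega

end Lower

end Stmt13

/-- The largest cardinality of a finite abelian group with two
generators whose directed Cayley graph has diameter at most `k` is exactly
`⌊(k+2)²/3⌋`. -/
theorem stmt13 (k : ℕ) :
    IsGreatest {n : ℕ | ∃ (G : AddCommGrpCat.{0}) (g₁ g₂ : G), Finite G ∧
        Nat.card G = n ∧
        ∀ a : G, ∃ a₁ a₂ : ℤ, 0 ≤ a₁ ∧ 0 ≤ a₂ ∧ a₁ + a₂ ≤ (k : ℤ) ∧
          a = a₁ • g₁ + a₂ • g₂}
      ((k + 2) ^ 2 / 3) := by
  constructor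
  · -- membership : the extremal construction
    set b := (k + 3) / 3 with hbdef
    set M := 2 * (k + 2) - 3 * b with hMdef
    set a := (k + 2) - 2 * b with hadef
    have hb : 0 < b := by omega
    have hM : 0 < M := by omega
    haveI : NeZero M := ⟨hM.ne'⟩
    haveI : NeZero b := ⟨hb.ne'⟩
    refine ⟨AddCommGrpCat.of ((ℤ × ℤ) ⧸ Stmt13.LL a b M),
      QuotientAddGroup.mk ((1:ℤ),(0:ℤ)), QuotientAddGroup.mk ((0:ℤ),(1:ℤ)), ?_, ?_, ?_⟩
    · exact Finite.of_injective _ (Stmt13.eqvFun_bij a b M hb hM).injective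
    · show Nat.card ((ℤ × ℤ) ⧸ Stmt13.LL a b M) = (k + 2) ^ 2 / 3
      rw [Nat.card_eq_of_bijective _ (Stmt13.eqvFun_bij a b M hb hM)]
      rw [Nat.card_prod, Nat.card_zmod, Nat.card_zmod]
      rw [hMdef, hbdef]
      exact Stmt13.card_arith k
    · intro q
      obtain ⟨a₁, a₂, h1, h2, h3, h4⟩ :=
        Stmt13.cover_quot k a b M hb hM (by push_cast; omega) (by push_cast; omega)
          (by push_cast; omega) q
      exact ⟨a₁, a₂, h1, h2, h3, h4⟩
  · -- upper bound
    rintro n ⟨G, g₁, g₂, hfin, hcard, hcov⟩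
    have Hc : ∀ x : ↥G, ∃ p : ℕ × ℕ, p.1 + p.2 ≤ k ∧ Stmt13.ff g₁ g₂ p = x := by
      intro x
      obtain ⟨a₁, a₂, h1, h2, h3, h4⟩ := hcov x
      refine ⟨(a₁.toNat, a₂.toNat), by omega, ?_⟩
      rw [← Int.toNat_of_nonneg h1, ← Int.toNat_of_nonneg h2] at h4
      rw [natCast_zsmul, natCast_zsmul] at h4
      exact h4.symm
    rw [← hcard]
    exact Stmt13.card_le_main g₁ g₂ Hc
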